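/- arXiv:2007.14384 — 3 statements merged into one kernel-verified Lean document; each statement's English description precedes it below -/
import Mathlib

section
/- Let N be a linear map on n-qubit operators that fixes the identity and acts on each non-identity Pauli string σᵢ by N(σᵢ) = cᵢσᵢ with |cᵢ| ≤ q for some 0 ≤ q < 1. If ρ has Pauli coefficient vector a⃗ and N(ρ) has coefficient vector a⃗′, then ‖a⃗′‖₂ ≤ q‖a⃗‖₂. More generally, after k applications of such channels interleaved with unitary conjugations, the coefficient vector satisfies ‖a⃗^(k)‖₂ ≤ qᵏ‖a⃗^(0)‖₂. -/
open Matrix BigOperators ComplexOrder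

lemma contract_step {ι : Type*} [Fintype ι] (q : ℝ) (hq0 : 0 ≤ q)
    (e x : ι → ℝ) (he : ∀ i, |e i| ≤ q) :
    Real.sqrt (∑ i, (e i * x i)^2) ≤ q * Real.sqrt (∑ i, (x i)^2) := by
  have h : ∑ i, (e i * x i)^2 ≤ q^2 * ∑ i, (x i)^2 := by
    rw [Finset.mul_sum]
    apply Finset.sum_le_sum
    intro i _
    have h1 : (e i)^2 ≤ q^2 := by
      rw [← sq_abs]
      exact pow_le_pow_left₀ (abs_nonneg _) (he i) 2
    calc (e i * x i)^2 = (e i)^2 * (x i)^2 := by ring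
      _ ≤ q^2 * (x i)^2 := by
          exact mul_le_mul_of_nonneg_right h1 (sq_nonneg _)
  calc Real.sqrt (∑ i, (e i * x i)^2) ≤ Real.sqrt (q^2 * ∑ i, (x i)^2) :=
        Real.sqrt_le_sqrt h
    _ = q * Real.sqrt (∑ i, (x i)^2) := by
        rw [Real.sqrt_mul (sq_nonneg q), Real.sqrt_sq hq0]

/-- A Pauli noise channel (fixing the identity and scaling each non-identity
Pauli string by a factor of magnitude at most `q`) contracts the Pauli
coefficient vector of a state by a factor `q`; more generally, `k`
applications of such channels interleaved with unitary conjugations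
(which preserve the 2-norm of the coefficient vector) contract it by `qᵏ`. -/
theorem stmt_2 {n : ℕ} {ι : Type*} [Fintype ι] [DecidableEq ι]
    (q : ℝ) (hq0 : 0 ≤ q) (hq1 : q < 1)
    (σ : ι → Matrix (Fin (2^n)) (Fin (2^n)) ℂ)
    (hherm : ∀ i, (σ i).IsHermitian)
    (htraceless : ∀ i, (σ i).trace = 0)
    (horth : ∀ i j, (σ i * σ j).trace = if i = j then ((2^n : ℕ) : ℂ) else 0)
    (N : Matrix (Fin (2^n)) (Fin (2^n)) ℂ →ₗ[ℂ] Matrix (Fin (2^n)) (Fin (2^n)) ℂ)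
    (c : ι → ℝ) (hN1 : N 1 = 1) (hNσ : ∀ i, N (σ i) = (c i : ℂ) • σ i)
    (hc : ∀ i, |c i| ≤ q)
    (ρ : Matrix (Fin (2^n)) (Fin (2^n)) ℂ) (a a' : ι → ℝ)
    (hρ : ρ = (((2^n : ℕ) : ℂ))⁻¹ • ((1 : Matrix (Fin (2^n)) (Fin (2^n)) ℂ)
        + ∑ i, (a i : ℂ) • σ i))
    (hρ' : N ρ = (((2^n : ℕ) : ℂ))⁻¹ • ((1 : Matrix (Fin (2^n)) (Fin (2^n)) ℂ)
        + ∑ i, (a' i : ℂ) • σ i))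
    -- a sequence of coefficient vectors, each step being Pauli noise with
    -- factors of magnitude at most `q` followed by a (norm-preserving)
    -- unitary conjugation
    (k : ℕ) (b : ℕ → ι → ℝ)
    (hstep : ∀ j < k, ∃ e : ι → ℝ, (∀ i, |e i| ≤ q) ∧
      ∑ i, (b (j+1) i)^2 = ∑ i, (e i * b j i)^2) :
    Real.sqrt (∑ i, (a' i)^2) ≤ q * Real.sqrt (∑ i, (a i)^2)
    ∧ Real.sqrt (∑ i, (b k i)^2) ≤ q^k * Real.sqrt (∑ i, (b 0 i)^2) := by
  have h2nz : ((2^n : ℕ) : ℂ) ≠ 0 := by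
    exact_mod_cast Nat.cast_ne_zero.mpr (pow_ne_zero n two_ne_zero)
  -- compute N ρ
  have h1 : N ρ = (((2^n : ℕ) : ℂ))⁻¹ • ((1 : Matrix (Fin (2^n)) (Fin (2^n)) ℂ)
      + ∑ i, ((c i * a i : ℝ) : ℂ) • σ i) := by
    rw [hρ, _root_.map_smul, map_add, map_sum, hN1]
    congr 1
    congr 1
    apply Finset.sum_congr rfl
    intro i _
    rw [_root_.map_smul, hNσ i, smul_smul]
    push_cast
    ring_nf
  have h2 : (∑ i, ((a' i : ℝ) : ℂ) • σ i)
      = ∑ i, ((c i * a i : ℝ) : ℂ) • σ i := by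
    have := hρ'.symm.trans h1
    have h3 := smul_right_injective _ (inv_ne_zero h2nz) this
    exact add_left_cancel h3
  -- extract coefficients
  have coeff : ∀ (d : ι → ℂ) (j : ι),
      ((∑ i, d i • σ i) * σ j).trace = d j * ((2^n : ℕ) : ℂ) := by
    intro d j
    rw [Finset.sum_mul, trace_sum]
    rw [Finset.sum_eq_single j]
    · rw [smul_mul_assoc, trace_smul, horth j j, if_pos rfl, smul_eq_mul]
    · intro i _ hij
      rw [smul_mul_assoc, trace_smul, horth i j, if_neg hij, smul_zero]
    · intro h; exact absurd (Finset.mem_univ j) h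
  have ha' : ∀ j, a' j = c j * a j := by
    intro j
    have := congrArg (fun M => (M * σ j).trace) h2
    rw [coeff, coeff] at this
    have h4 := mul_right_cancel₀ h2nz this
    exact_mod_cast h4
  constructor
  · have : ∑ i, (a' i)^2 = ∑ i, (c i * a i)^2 := by
      apply Finset.sum_congr rfl; intro i _; rw [ha' i]
    rw [this]
    exact contract_step q hq0 c a hc
  · induction k with
    | zero => simp
    | succ m ih =>
      have hm := ih (fun j hj => hstep j (Nat.lt_succ_of_lt hj))
      obtain ⟨e, he, heq⟩ := hstep m (Nat.lt_succ_self m)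
      calc Real.sqrt (∑ i, (b (m+1) i)^2)
          = Real.sqrt (∑ i, (e i * b m i)^2) := by rw [heq]
        _ ≤ q * Real.sqrt (∑ i, (b m i)^2) := contract_step q hq0 e (b m) he
        _ ≤ q * (q^m * Real.sqrt (∑ i, (b 0 i)^2)) :=
            mul_le_mul_of_nonneg_left hm hq0
        _ = q^(m+1) * Real.sqrt (∑ i, (b 0 i)^2) := by ring
end

section
/- (Concentration of the noisy cost.) Consider an n-qubit circuit consisting of L unitary layers, with a Pauli noise channel of strength q (each non-identity Pauli coefficient is multiplied by a factor of magnitude ≤ q) applied before and after each layer, acting on a pure input state ρ₀. Let O = Σᵢωᵢσᵢ be an observable with N_O nonzero Pauli coefficients (no identity component, after subtracting Tr[O]/2ⁿ·I), and let C̃ = Tr[O ρ_out] be the output expectation value. Then |C̃ − Tr[O]/2ⁿ| ≤ N_O ‖ω⃗‖∞ · 2^{n/2} q^{L+1}. -/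
open Matrix BigOperators ComplexOrder

/-- The output of a noisy layered circuit: the noise channel `Nc` is applied
before and after each unitary layer, i.e. `𝒩 ∘ 𝒰_L ∘ ⋯ ∘ 𝒩 ∘ 𝒰_1 ∘ 𝒩`. -/
noncomputable def runCircuit {d : ℕ}
    (Nc : Matrix (Fin d) (Fin d) ℂ →ₗ[ℂ] Matrix (Fin d) (Fin d) ℂ)
    (Us : List (Matrix (Fin d) (Fin d) ℂ)) (ρ : Matrix (Fin d) (Fin d) ℂ) :
    Matrix (Fin d) (Fin d) ℂ :=
  Us.foldl (fun s V => Nc (V * s * Vᴴ)) (Nc ρ)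

section Aux

variable {n : ℕ} {ι : Type*} [Fintype ι] [DecidableEq ι]

/-- Linear maps agreeing on `1` and on a (traceless, orthogonal) Pauli family agree. -/
theorem pauli_ext
    (hcard : Fintype.card ι = 4^n - 1)
    (σ : ι → Matrix (Fin (2^n)) (Fin (2^n)) ℂ)
    (htraceless : ∀ i, (σ i).trace = 0)
    (horth : ∀ i j, (σ i * σ j).trace = if i = j then ((2^n : ℕ) : ℂ) else 0)
    {W : Type*} [AddCommGroup W] [Module ℂ W]
    (f g : Matrix (Fin (2^n)) (Fin (2^n)) ℂ →ₗ[ℂ] W)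
    (h1 : f 1 = g 1) (hσ : ∀ i, f (σ i) = g (σ i)) : f = g := by
  classical
  set D : ℂ := ((2^n : ℕ) : ℂ) with hDdef
  have hD0 : D ≠ 0 := by simp [hDdef]
  set b : Option ι → Matrix (Fin (2^n)) (Fin (2^n)) ℂ := fun k => k.elim 1 σ with hbdef
  have htrbb : ∀ (i : ι) (k : Option ι), (σ i * b k).trace = if some i = k then D else 0 := by
    intro i k
    cases k with
    | none => simp [hbdef, htraceless i]
    | some j => simp [hbdef, horth i j, hDdef]
  have htrb : ∀ k, (b k).trace = if k = none then D else 0 := by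
    intro k
    cases k with
    | none => simp [hbdef, Matrix.trace_one, hDdef]
    | some j => simp [hbdef, htraceless j]
  have hli : LinearIndependent ℂ b := by
    rw [Fintype.linearIndependent_iff]
    intro g hg k
    cases k with
    | none =>
      have h := congrArg Matrix.trace hg
      simp [Matrix.trace_smul, htrb, Fintype.sum_option, smul_eq_mul] at h
      exact h.resolve_right hD0
    | some i =>
      have h := congrArg (fun x => (σ i * x).trace) hg
      simp only [Matrix.mul_sum, Matrix.mul_smul, Matrix.trace_sum, Matrix.trace_smul,
        Matrix.mul_zero, Matrix.trace_zero, smul_eq_mul, htrbb, mul_ite, mul_zero,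
        Finset.sum_ite_eq, Finset.mem_univ, if_true] at h
      rcases mul_eq_zero.mp h with h' | h'
      · exact h'
      · exact absurd h' hD0
  have hcardOpt : Fintype.card (Option ι)
      = Module.finrank ℂ (Matrix (Fin (2^n)) (Fin (2^n)) ℂ) := by
    rw [Module.finrank_matrix]
    have h4 : (4:ℕ)^n = 2^n * 2^n := by rw [← mul_pow]; norm_num
    have h1 : 1 ≤ (4:ℕ)^n := Nat.one_le_pow _ _ (by norm_num)
    simp [Fintype.card_option, hcard, Fintype.card_fin, Module.finrank_self]
    omega
  let B : Module.Basis (Option ι) ℂ (Matrix (Fin (2^n)) (Fin (2^n)) ℂ) :=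
    basisOfLinearIndependentOfCardEqFinrank hli hcardOpt
  have hBcoe : ∀ k, B k = b k := fun k => by
    simp [B, coe_basisOfLinearIndependentOfCardEqFinrank]
  apply B.ext
  intro k
  rw [hBcoe]
  cases k with
  | none => exact h1
  | some i => exact hσ i

end Aux

/-- Concentration of the noisy cost: for `L` unitary layers interleaved with
Pauli noise of strength `q` acting on a pure input state, and an observable
`O = Σᵢ ωᵢσᵢ` with `N_O` nonzero Pauli coefficients,
`|C̃ − Tr[O]/2ⁿ| ≤ N_O ‖ω⃗‖∞ 2^{n/2} q^{L+1}`. -/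
theorem stmt_7 {n : ℕ} {ι : Type*} [Fintype ι] [DecidableEq ι]
    (hcard : Fintype.card ι = 4^n - 1)
    (σ : ι → Matrix (Fin (2^n)) (Fin (2^n)) ℂ)
    (hherm : ∀ i, (σ i).IsHermitian)
    (htraceless : ∀ i, (σ i).trace = 0)
    (horth : ∀ i j, (σ i * σ j).trace = if i = j then ((2^n : ℕ) : ℂ) else 0)
    (q : ℝ) (hq0 : 0 ≤ q) (hq1 : q < 1)
    (Nc : Matrix (Fin (2^n)) (Fin (2^n)) ℂ →ₗ[ℂ] Matrix (Fin (2^n)) (Fin (2^n)) ℂ)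
    (c : ι → ℝ) (hN1 : Nc 1 = 1) (hNσ : ∀ i, Nc (σ i) = (c i : ℂ) • σ i)
    (hc : ∀ i, |c i| ≤ q)
    (Us : List (Matrix (Fin (2^n)) (Fin (2^n)) ℂ))
    (hUs : ∀ V ∈ Us, V ∈ Matrix.unitaryGroup (Fin (2^n)) ℂ)
    (ρ₀ : Matrix (Fin (2^n)) (Fin (2^n)) ℂ)
    (hρ₀psd : ρ₀.PosSemidef) (hρ₀tr : ρ₀.trace = 1)
    (hρ₀pure : (ρ₀ * ρ₀).trace = 1)
    (ω : ι → ℝ) (O : Matrix (Fin (2^n)) (Fin (2^n)) ℂ)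
    (hO : O = ∑ i, (ω i : ℂ) • σ i) :
    ‖(O * runCircuit Nc Us ρ₀).trace - O.trace / ((2^n : ℕ) : ℂ)‖
      ≤ ((Finset.univ.filter (fun i => ω i ≠ 0)).card : ℝ)
        * (⨆ i, |ω i|) * Real.sqrt (2^n) * q ^ (Us.length + 1) := by
  classical
  set D : ℂ := ((2^n : ℕ) : ℂ) with hDdef
  set tr : Matrix (Fin (2^n)) (Fin (2^n)) ℂ →ₗ[ℂ] ℂ := Matrix.traceLinearMap (Fin (2^n)) ℂ ℂ
    with htrdef
  -- Key identity: resolution of the identity from the Pauli basis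
  have key : ∀ s : Matrix (Fin (2^n)) (Fin (2^n)) ℂ,
      (∑ i, (σ i * s).trace • σ i)
        = D • s - s.trace • (1 : Matrix (Fin (2^n)) (Fin (2^n)) ℂ) := by
    have hmaps : (∑ i, ((tr ∘ₗ LinearMap.mulLeft ℂ (σ i)).smulRight (σ i)))
        = D • (LinearMap.id :
              Matrix (Fin (2^n)) (Fin (2^n)) ℂ →ₗ[ℂ] Matrix (Fin (2^n)) (Fin (2^n)) ℂ)
          - tr.smulRight 1 := by
      apply pauli_ext hcard σ htraceless horth
      · simp only [LinearMap.sum_apply, LinearMap.smulRight_apply, LinearMap.comp_apply,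
          LinearMap.mulLeft_apply, LinearMap.sub_apply, LinearMap.smul_apply, LinearMap.id_apply,
          htrdef, Matrix.traceLinearMap_apply, mul_one, Matrix.trace_one]
        simp [htraceless, hDdef]
      · intro j
        simp only [LinearMap.sum_apply, LinearMap.smulRight_apply, LinearMap.comp_apply,
          LinearMap.mulLeft_apply, LinearMap.sub_apply, LinearMap.smul_apply, LinearMap.id_apply,
          htrdef, Matrix.traceLinearMap_apply, horth, htraceless, zero_smul, sub_zero,
          ite_smul, Finset.sum_ite_eq', Finset.mem_univ, if_true]
    intro s
    have h := LinearMap.congr_fun hmaps s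
    simpa [htrdef] using h
  -- Trace of each Pauli against the noise channel output
  have hnoise : ∀ (i : ι) s, (σ i * Nc s).trace = (c i : ℂ) * (σ i * s).trace := by
    intro i
    have hmaps : (tr ∘ₗ LinearMap.mulLeft ℂ (σ i)) ∘ₗ Nc
        = ((c i : ℂ)) • (tr ∘ₗ LinearMap.mulLeft ℂ (σ i)) := by
      apply pauli_ext hcard σ htraceless horth
      · simp [htrdef, hN1, htraceless i]
      · intro j
        simp only [LinearMap.comp_apply, LinearMap.smul_apply, LinearMap.mulLeft_apply,
          htrdef, Matrix.traceLinearMap_apply, hNσ j, Matrix.mul_smul, Matrix.trace_smul,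
          smul_eq_mul, horth]
        by_cases hij : i = j
        · subst hij; simp
        · simp [hij]
    intro s
    have h := LinearMap.congr_fun hmaps s
    simpa [htrdef] using h
  -- The noise channel is trace preserving
  have htrN : ∀ s, (Nc s).trace = s.trace := by
    have hmaps : tr ∘ₗ Nc = tr := by
      apply pauli_ext hcard σ htraceless horth
      · simp [htrdef, hN1]
      · intro j; simp [htrdef, hNσ j, htraceless j]
    intro s
    have h := LinearMap.congr_fun hmaps s
    simpa [htrdef] using h
  -- conjugates of Pauli traces
  have hstar : ∀ (i : ι) (s : Matrix (Fin (2^n)) (Fin (2^n)) ℂ),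
      (starRingEnd ℂ) ((σ i * s).trace) = (σ i * sᴴ).trace := by
    intro i s
    have h1 : (starRingEnd ℂ) ((σ i * s).trace) = ((σ i * s)ᴴ).trace := by
      rw [Matrix.trace_conjTranspose]; rfl
    rw [h1, Matrix.conjTranspose_mul, (hherm i).eq, Matrix.trace_mul_comm]
  -- Parseval identity
  set Φ : Matrix (Fin (2^n)) (Fin (2^n)) ℂ → ℝ :=
    fun s => ∑ i, Complex.normSq ((σ i * s).trace) with hΦdef
  have hΦnonneg : ∀ s, 0 ≤ Φ s := fun s =>
    Finset.sum_nonneg fun i _ => Complex.normSq_nonneg _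
  have parseval : ∀ s : Matrix (Fin (2^n)) (Fin (2^n)) ℂ,
      ((Φ s : ℝ) : ℂ) = D * (s * sᴴ).trace - s.trace * (starRingEnd ℂ) s.trace := by
    intro s
    have h1 : ((Φ s : ℝ) : ℂ) = ∑ i, (σ i * s).trace * (σ i * sᴴ).trace := by
      rw [hΦdef, Complex.ofReal_sum]
      refine Finset.sum_congr rfl fun i _ => ?_
      rw [← hstar i s]
      exact (Complex.mul_conj _).symm
    have h2 : ∑ i, (σ i * s).trace * (σ i * sᴴ).trace
        = ((∑ i, (σ i * s).trace • σ i) * sᴴ).trace := by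
      rw [Finset.sum_mul, Matrix.trace_sum]
      refine Finset.sum_congr rfl fun i _ => ?_
      rw [Matrix.smul_mul, Matrix.trace_smul, smul_eq_mul]
    rw [h1, h2, key, Matrix.sub_mul, Matrix.smul_mul, Matrix.trace_sub, Matrix.trace_smul,
      Matrix.smul_mul, Matrix.one_mul, Matrix.trace_smul, Matrix.trace_conjTranspose]
    simp [smul_eq_mul]
  -- Unitary invariance of Φ
  have hUinv : ∀ V ∈ Matrix.unitaryGroup (Fin (2^n)) ℂ,
      ∀ s, Φ (V * s * Vᴴ) = Φ s := by
    intro V hV s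
    have hV1 : Vᴴ * V = 1 := by
      rw [← Matrix.star_eq_conjTranspose]; exact hV.1
    have htr1 : ((V * s * Vᴴ) * (V * s * Vᴴ)ᴴ).trace = (s * sᴴ).trace := by
      have h : (V * s * Vᴴ) * (V * s * Vᴴ)ᴴ = V * (s * sᴴ) * Vᴴ := by
        simp only [Matrix.conjTranspose_mul, Matrix.conjTranspose_conjTranspose,
          Matrix.mul_assoc]
        rw [← Matrix.mul_assoc Vᴴ V, hV1, Matrix.one_mul]
      rw [h, Matrix.trace_mul_comm, ← Matrix.mul_assoc, hV1, Matrix.one_mul]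
    have htr2 : (V * s * Vᴴ).trace = s.trace := by
      rw [Matrix.trace_mul_comm, ← Matrix.mul_assoc, hV1, Matrix.one_mul]
    have h1 := parseval (V * s * Vᴴ)
    rw [htr1, htr2] at h1
    have h2 := parseval s
    exact Complex.ofReal_injective (h1.trans h2.symm)
  -- Noise contracts Φ
  have hNoiseΦ : ∀ s, Φ (Nc s) ≤ q^2 * Φ s := by
    intro s
    have h1 : Φ (Nc s) = ∑ i, (c i)^2 * Complex.normSq ((σ i * s).trace) := by
      rw [hΦdef]
      refine Finset.sum_congr rfl fun i _ => ?_
      rw [hnoise i s, Complex.normSq_mul, Complex.normSq_ofReal, sq]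
    rw [h1, Finset.mul_sum]
    refine Finset.sum_le_sum fun i _ => ?_
    refine mul_le_mul_of_nonneg_right ?_ (Complex.normSq_nonneg _)
    calc (c i)^2 = |c i|^2 := (sq_abs _).symm
      _ ≤ q^2 := pow_le_pow_left₀ (abs_nonneg _) (hc i) 2
  -- Initial bound on Φ from purity
  have hΦ0 : Φ ρ₀ ≤ (2^n : ℝ) := by
    have h := parseval ρ₀
    rw [hρ₀psd.1.eq, hρ₀pure, hρ₀tr] at h
    have h2 : ((Φ ρ₀ : ℝ) : ℂ) = (((2^n : ℝ) - 1 : ℝ) : ℂ) := by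
      rw [h, hDdef, _root_.map_one]; push_cast; ring
    have h3 : Φ ρ₀ = (2^n : ℝ) - 1 := Complex.ofReal_injective h2
    have : (0:ℝ) ≤ (2:ℝ)^n := by positivity
    linarith
  -- Contraction along the circuit
  have hfold : ∀ (Ws : List (Matrix (Fin (2^n)) (Fin (2^n)) ℂ)),
      (∀ V ∈ Ws, V ∈ Matrix.unitaryGroup (Fin (2^n)) ℂ) →
      ∀ s, Φ (Ws.foldl (fun s V => Nc (V * s * Vᴴ)) s) ≤ q^(2*Ws.length) * Φ s := by
    intro Ws
    induction Ws with
    | nil => intro _ s; simp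
    | cons V Ws ih =>
      intro hW s
      have hVmem := hW V List.mem_cons_self
      have h1 := ih (fun W hw => hW W (List.mem_cons_of_mem _ hw)) (Nc (V * s * Vᴴ))
      rw [List.foldl_cons]
      calc Φ (Ws.foldl (fun s V => Nc (V * s * Vᴴ)) (Nc (V * s * Vᴴ)))
          ≤ q^(2*Ws.length) * Φ (Nc (V * s * Vᴴ)) := h1
        _ ≤ q^(2*Ws.length) * (q^2 * Φ (V * s * Vᴴ)) :=
            mul_le_mul_of_nonneg_left (hNoiseΦ _) (pow_nonneg hq0 _)
        _ = q^(2*(V :: Ws).length) * Φ s := by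
            rw [hUinv V hVmem s, List.length_cons]; ring
  have hΦout : Φ (runCircuit Nc Us ρ₀) ≤ (q^(Us.length+1))^2 * (2^n : ℝ) := by
    have h1 := hfold Us hUs (Nc ρ₀)
    calc Φ (runCircuit Nc Us ρ₀) ≤ q^(2*Us.length) * Φ (Nc ρ₀) := by
          rw [runCircuit]; exact h1
      _ ≤ q^(2*Us.length) * (q^2 * Φ ρ₀) :=
          mul_le_mul_of_nonneg_left (hNoiseΦ ρ₀) (pow_nonneg hq0 _)
      _ ≤ q^(2*Us.length) * (q^2 * (2^n : ℝ)) :=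
          mul_le_mul_of_nonneg_left
            (mul_le_mul_of_nonneg_left hΦ0 (sq_nonneg q)) (pow_nonneg hq0 _)
      _ = (q^(Us.length+1))^2 * (2^n : ℝ) := by ring
  -- per-Pauli bound on the output
  have hterm : ∀ i, ‖(σ i * runCircuit Nc Us ρ₀).trace‖
      ≤ Real.sqrt (2^n) * q^(Us.length+1) := by
    intro i
    have h1 : Complex.normSq ((σ i * runCircuit Nc Us ρ₀).trace) ≤ Φ (runCircuit Nc Us ρ₀) :=
      Finset.single_le_sum (f := fun j => Complex.normSq ((σ j * runCircuit Nc Us ρ₀).trace))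
        (fun j _ => Complex.normSq_nonneg _) (Finset.mem_univ i)
    have h2 := h1.trans hΦout
    calc ‖(σ i * runCircuit Nc Us ρ₀).trace‖
        = Real.sqrt (Complex.normSq ((σ i * runCircuit Nc Us ρ₀).trace)) := by rw [Complex.norm_def]
      _ ≤ Real.sqrt ((q^(Us.length+1))^2 * (2^n : ℝ)) := Real.sqrt_le_sqrt h2
      _ = Real.sqrt (2^n) * q^(Us.length+1) := by
          rw [Real.sqrt_mul (sq_nonneg _), Real.sqrt_sq (pow_nonneg hq0 _)]
          ring
  -- Assemble
  have hOtr : O.trace = 0 := by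
    simp [hO, Matrix.trace_sum, Matrix.trace_smul, htraceless]
  have hOρ : (O * runCircuit Nc Us ρ₀).trace
      = ∑ i, (ω i : ℂ) * (σ i * runCircuit Nc Us ρ₀).trace := by
    rw [hO, Finset.sum_mul, Matrix.trace_sum]
    refine Finset.sum_congr rfl fun i _ => ?_
    rw [Matrix.smul_mul, Matrix.trace_smul, smul_eq_mul]
  have hsum : ∑ i, (ω i : ℂ) * (σ i * runCircuit Nc Us ρ₀).trace
      = ∑ i ∈ Finset.univ.filter (fun i => ω i ≠ 0),
          (ω i : ℂ) * (σ i * runCircuit Nc Us ρ₀).trace := by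
    symm
    refine Finset.sum_filter_of_ne fun i _ h => ?_
    intro h0
    exact h (by rw [h0]; simp)
  rw [hOtr, zero_div, sub_zero, hOρ, hsum]
  by_cases hsupp : (Finset.univ.filter (fun i => ω i ≠ 0)) = ∅
  · rw [hsupp]
    simp
  · obtain ⟨i₀, hi₀⟩ := Finset.nonempty_iff_ne_empty.mpr hsupp
    have : Nonempty ι := ⟨i₀⟩
    have hSi : ∀ i, |ω i| ≤ ⨆ j, |ω j| :=
      fun i => le_ciSup (f := fun j => |ω j|) (Finite.bddAbove_range _) i
    have hS0 : 0 ≤ ⨆ j, |ω j| := (abs_nonneg (ω i₀)).trans (hSi i₀)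
    calc ‖∑ i ∈ Finset.univ.filter (fun i => ω i ≠ 0),
            (ω i : ℂ) * (σ i * runCircuit Nc Us ρ₀).trace‖
        ≤ ∑ i ∈ Finset.univ.filter (fun i => ω i ≠ 0),
            ‖(ω i : ℂ) * (σ i * runCircuit Nc Us ρ₀).trace‖ :=
          norm_sum_le _ _
      _ = ∑ i ∈ Finset.univ.filter (fun i => ω i ≠ 0),
            |ω i| * ‖(σ i * runCircuit Nc Us ρ₀).trace‖ := by
          refine Finset.sum_congr rfl fun i _ => ?_
          rw [norm_mul, Complex.norm_real, Real.norm_eq_abs]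
      _ ≤ ∑ i ∈ Finset.univ.filter (fun i => ω i ≠ 0),
            (⨆ j, |ω j|) * (Real.sqrt (2^n) * q^(Us.length+1)) := by
          refine Finset.sum_le_sum fun i _ => ?_
          exact mul_le_mul (hSi i) (hterm i) (norm_nonneg _) hS0
      _ = ((Finset.univ.filter (fun i => ω i ≠ 0)).card : ℝ)
            * ((⨆ j, |ω j|) * (Real.sqrt (2^n) * q^(Us.length+1))) := by
          rw [Finset.sum_const, nsmul_eq_mul]
      _ = ((Finset.univ.filter (fun i => ω i ≠ 0)).card : ℝ)
            * (⨆ i, |ω i|) * Real.sqrt (2^n) * q ^ (Us.length + 1) := by ring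
end

section
/- (Combined cost-and-measurement-noise concentration.) Under L noisy layers with unitary-interleaved Pauli noise of strength q acting on a pure n-qubit input state, and additionally local symmetric bit-flip measurement noise with parameter q_M, for an observable O = Σᵢωᵢσᵢ (no identity component) with N_O nonzero coefficients and minimum Pauli weight w, the noisy cost satisfies |C̃ − Tr[O]/2ⁿ| ≤ q_M^{w} · N_O ‖ω⃗‖∞ · 2^{n/2} q^{L+1}. -/
open Matrix BigOperators ComplexOrder

set_option linter.unusedSectionVars false

section Helpers

variable {n : ℕ} {ι : Type*} [Fintype ι] [DecidableEq ι]

/-- trace pairing on the extended family `1, σ i` -/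
lemma pair_trace
    (σ : ι → Matrix (Fin (2^n)) (Fin (2^n)) ℂ)
    (htraceless : ∀ i, (σ i).trace = 0)
    (horth : ∀ i j, (σ i * σ j).trace = if i = j then ((2^n : ℕ) : ℂ) else 0) :
    ∀ o o' : Option ι, ((Option.elim o 1 σ) * (Option.elim o' 1 σ)).trace
      = if o = o' then ((2^n : ℕ) : ℂ) else 0 := by
  rintro (_|i) (_|j) <;>
    simp [Matrix.trace_one, htraceless, horth]

lemma decomp_aux
    (hcard : Fintype.card ι = 4^n - 1)
    (σ : ι → Matrix (Fin (2^n)) (Fin (2^n)) ℂ)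
    (htraceless : ∀ i, (σ i).trace = 0)
    (horth : ∀ i j, (σ i * σ j).trace = if i = j then ((2^n : ℕ) : ℂ) else 0) :
    ∀ X : Matrix (Fin (2^n)) (Fin (2^n)) ℂ,
      X = (X.trace / ((2^n : ℕ) : ℂ)) • 1
        + ∑ i, (((σ i * X).trace / ((2^n : ℕ) : ℂ)) • σ i) := by
  have hD0 : ((2^n : ℕ) : ℂ) ≠ 0 := Nat.cast_ne_zero.mpr (by positivity)
  set B : Option ι → Matrix (Fin (2^n)) (Fin (2^n)) ℂ := fun o => Option.elim o 1 σ with hB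
  have htrB := pair_trace σ htraceless horth
  -- pairing of B with a linear combination
  have hpair : ∀ (u : Option ι → ℂ) (o : Option ι),
      ((B o) * ∑ o', u o' • B o').trace = u o * ((2^n : ℕ) : ℂ) := by
    intro u o
    rw [Finset.mul_sum, Matrix.trace_sum]
    have : ∀ o' : Option ι, (B o * (u o' • B o')).trace = u o' * ((B o * B o').trace) := by
      intro o'; rw [mul_smul_comm, Matrix.trace_smul]; simp [smul_eq_mul]
    simp_rw [this, (show ∀ o o' : Option ι, (B o * B o').trace = if o = o' then ((2^n : ℕ) : ℂ) else 0 from htrB)]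
    simp
  have hli : LinearIndependent ℂ B := by
    rw [Fintype.linearIndependent_iff]
    intro g hg o
    have := hpair g o
    rw [hg, Matrix.mul_zero, Matrix.trace_zero] at this
    exact (mul_eq_zero.mp this.symm).resolve_right hD0
  have hcardB : Fintype.card (Option ι) = Module.finrank ℂ (Matrix (Fin (2^n)) (Fin (2^n)) ℂ) := by
    rw [Module.finrank_matrix]
    simp [Fintype.card_option, hcard, Module.finrank_self]
    have h4 : (1:ℕ) ≤ 4^n := Nat.one_le_pow _ _ (by norm_num)
    have h2 : (2:ℕ)^n * 2^n = 4^n := by rw [← mul_pow]; norm_num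
    omega
  let b : Module.Basis (Option ι) ℂ (Matrix (Fin (2^n)) (Fin (2^n)) ℂ) :=
    basisOfLinearIndependentOfCardEqFinrank hli hcardB
  have hb : ⇑b = B := coe_basisOfLinearIndependentOfCardEqFinrank hli hcardB
  intro X
  have hX : ∑ o, b.repr X o • B o = X := by
    conv_rhs => rw [← Module.Basis.sum_repr b X]
    simp [hb]
  have hrepr : ∀ o, b.repr X o = (B o * X).trace / ((2^n : ℕ) : ℂ) := by
    intro o
    have := hpair (fun o' => b.repr X o') o
    rw [hX] at this
    rw [this, mul_div_cancel_right₀ _ hD0]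
  calc X = ∑ o, b.repr X o • B o := hX.symm
    _ = b.repr X none • B none + ∑ i, b.repr X (some i) • B (some i) := Fintype.sum_option _
    _ = (X.trace / ((2^n : ℕ) : ℂ)) • 1 + ∑ i, (((σ i * X).trace / ((2^n : ℕ) : ℂ)) • σ i) := by
        simp_rw [hrepr]
        simp [hB]

end Helpers

section More
variable {n : ℕ} {ι : Type*} [Fintype ι] [DecidableEq ι]

lemma coe_Nc
    (hcard : Fintype.card ι = 4^n - 1)
    (σ : ι → Matrix (Fin (2^n)) (Fin (2^n)) ℂ)
    (htraceless : ∀ i, (σ i).trace = 0)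
    (horth : ∀ i j, (σ i * σ j).trace = if i = j then ((2^n : ℕ) : ℂ) else 0)
    (Nc : Matrix (Fin (2^n)) (Fin (2^n)) ℂ →ₗ[ℂ] Matrix (Fin (2^n)) (Fin (2^n)) ℂ)
    (c : ι → ℝ) (hN1 : Nc 1 = 1) (hNσ : ∀ i, Nc (σ i) = (c i : ℂ) • σ i) :
    ∀ X i, (σ i * Nc X).trace = (c i : ℂ) * (σ i * X).trace := by
  have hD0 : ((2^n : ℕ) : ℂ) ≠ 0 := Nat.cast_ne_zero.mpr (by positivity)
  intro X i
  conv_lhs => rw [decomp_aux hcard σ htraceless horth X]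
  rw [map_add, LinearMap.map_smul, hN1, map_sum]
  simp_rw [LinearMap.map_smul, hNσ]
  rw [Matrix.mul_add, Matrix.trace_add, mul_smul_comm, Matrix.trace_smul]
  rw [Finset.mul_sum, Matrix.trace_sum]
  simp_rw [smul_smul, mul_smul_comm, Matrix.trace_smul, smul_eq_mul, horth]
  simp only [mul_ite, mul_zero, Finset.sum_ite_eq', Finset.mem_univ, if_true]
  rw [Matrix.mul_one]
  field_simp [htraceless i]
  simp only [htraceless i, mul_zero, zero_add, Finset.sum_ite_eq, Finset.mem_univ, if_true]
  ring

lemma F_formula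
    (hcard : Fintype.card ι = 4^n - 1)
    (σ : ι → Matrix (Fin (2^n)) (Fin (2^n)) ℂ)
    (hherm : ∀ i, (σ i).IsHermitian)
    (htraceless : ∀ i, (σ i).trace = 0)
    (horth : ∀ i j, (σ i * σ j).trace = if i = j then ((2^n : ℕ) : ℂ) else 0) :
    ∀ X : Matrix (Fin (2^n)) (Fin (2^n)) ℂ,
      ((∑ i, Complex.normSq ((σ i * X).trace) : ℝ) : ℂ)
        = ((2^n : ℕ) : ℂ) * (Xᴴ * X).trace
          - (starRingEnd ℂ) X.trace * X.trace := by
  have hD0 : ((2^n : ℕ) : ℂ) ≠ 0 := Nat.cast_ne_zero.mpr (by positivity)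
  set D : ℂ := ((2^n : ℕ) : ℂ) with hDdef
  set B : Option ι → Matrix (Fin (2^n)) (Fin (2^n)) ℂ := fun o => Option.elim o 1 σ with hB
  have htrB := pair_trace σ htraceless horth
  have hBH : ∀ o, (B o)ᴴ = B o := by rintro (_|i) <;> simp [hB]; exact hherm i
  have expand : ∀ u v : Option ι → ℂ,
      ((∑ o, u o • B o) * (∑ o, v o • B o)).trace = (∑ o, u o * v o) * D := by
    intro u v
    rw [Finset.sum_mul_sum, Matrix.trace_sum]
    simp_rw [Matrix.trace_sum, smul_mul_smul_comm, Matrix.trace_smul, smul_eq_mul, (show ∀ o o' : Option ι, (B o * B o').trace = if o = o' then ((2^n : ℕ) : ℂ) else 0 from htrB)]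
    simp [Finset.mul_sum, Finset.sum_mul, mul_ite, mul_zero]
    simp only [hDdef]
    push_cast
    rw [add_mul, Finset.sum_mul]
  intro X
  set t : ℂ := X.trace / D with ht
  set d : ι → ℂ := fun i => (σ i * X).trace / D with hd
  have hXo : X = ∑ o : Option ι, (Option.elim o t d) • B o := by
    rw [Fintype.sum_option]
    exact decomp_aux hcard σ htraceless horth X
  have hXHo : Xᴴ = ∑ o : Option ι, (Option.elim o ((starRingEnd ℂ) t) fun j => (starRingEnd ℂ) (d j)) • B o := by
    conv_lhs => rw [hXo]
    rw [Matrix.conjTranspose_sum]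
    congr 1; funext o
    rw [Matrix.conjTranspose_smul, hBH]
    cases o <;> rfl
  have htr : (Xᴴ * X).trace = ((starRingEnd ℂ) t * t + ∑ i, (starRingEnd ℂ) (d i) * d i) * D := by
    conv_lhs => rw [hXHo, hXo]
    rw [expand, Fintype.sum_option]
    rfl
  have htrX : X.trace = t * D := by exact (div_mul_cancel₀ _ hD0).symm
  have hcoe : ∀ i, (σ i * X).trace = d i * D := by intro i; exact (div_mul_cancel₀ _ hD0).symm
  have hconjD : (starRingEnd ℂ) D = D := Complex.conj_natCast _
  push_cast
  simp_rw [Complex.normSq_eq_conj_mul_self]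
  simp_rw [hcoe, _root_.map_mul, hconjD]
  rw [htr, htrX, _root_.map_mul, hconjD]
  have hterm : ∀ i, (starRingEnd ℂ) (d i) * D * (d i * D)
      = ((starRingEnd ℂ) (d i) * d i) * (D * D) := fun i => by ring
  simp_rw [hterm]
  rw [← Finset.sum_mul]
  ring

end More

/-- Combined cost-and-measurement-noise concentration: with `L` noisy layers of
Pauli noise of strength `q` on a pure input and additional local symmetric
bit-flip measurement noise of parameter `q_M` (mapping `ωᵢ ↦ q_M^{w(i)}ωᵢ`),
the noisy cost satisfies `|C̃ − Tr[O]/2ⁿ| ≤ q_M^w N_O ‖ω⃗‖∞ 2^{n/2} q^{L+1}`. -/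
theorem stmt_15 {n : ℕ} {ι : Type*} [Fintype ι] [DecidableEq ι]
    (hcard : Fintype.card ι = 4^n - 1)
    (σ : ι → Matrix (Fin (2^n)) (Fin (2^n)) ℂ)
    (hherm : ∀ i, (σ i).IsHermitian)
    (htraceless : ∀ i, (σ i).trace = 0)
    (horth : ∀ i j, (σ i * σ j).trace = if i = j then ((2^n : ℕ) : ℂ) else 0)
    (q : ℝ) (hq0 : 0 ≤ q) (hq1 : q < 1)
    (Nc : Matrix (Fin (2^n)) (Fin (2^n)) ℂ →ₗ[ℂ] Matrix (Fin (2^n)) (Fin (2^n)) ℂ)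
    (c : ι → ℝ) (hN1 : Nc 1 = 1) (hNσ : ∀ i, Nc (σ i) = (c i : ℂ) • σ i)
    (hc : ∀ i, |c i| ≤ q)
    (Us : List (Matrix (Fin (2^n)) (Fin (2^n)) ℂ))
    (hUs : ∀ V ∈ Us, V ∈ Matrix.unitaryGroup (Fin (2^n)) ℂ)
    (ρ₀ : Matrix (Fin (2^n)) (Fin (2^n)) ℂ)
    (hρ₀psd : ρ₀.PosSemidef) (hρ₀tr : ρ₀.trace = 1)
    (hρ₀pure : (ρ₀ * ρ₀).trace = 1)
    -- measurement noise: each Pauli coefficient `ωᵢ` of the observable is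
    -- multiplied by `q_M^{w i}` where `w i` is the weight of the string
    (qM : ℝ) (hqM0 : 0 ≤ qM) (hqM1 : qM ≤ 1)
    (w : ι → ℕ) (wmin : ℕ)
    (ω : ι → ℝ) (hwsupp : ∀ i, ω i ≠ 0 → wmin ≤ w i)
    (O Otilde : Matrix (Fin (2^n)) (Fin (2^n)) ℂ)
    (hO : O = ∑ i, (ω i : ℂ) • σ i)
    (hOtilde : Otilde = ∑ i, ((qM ^ (w i) * ω i : ℝ) : ℂ) • σ i) :
    ‖(Otilde * runCircuit Nc Us ρ₀).trace - O.trace / ((2^n : ℕ) : ℂ)‖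
      ≤ qM ^ wmin * ((Finset.univ.filter (fun i => ω i ≠ 0)).card : ℝ)
        * (⨆ i, |ω i|) * Real.sqrt (2^n) * q ^ (Us.length + 1) := by
  
  classical
  set F : Matrix (Fin (2^n)) (Fin (2^n)) ℂ → ℝ :=
    fun X => ∑ i, Complex.normSq ((σ i * X).trace) with hF
  have hFnn : ∀ X, 0 ≤ F X := fun X => Finset.sum_nonneg fun i _ => Complex.normSq_nonneg _
  -- noise contracts F
  have hFNc : ∀ X, F (Nc X) ≤ q^2 * F X := by
    intro X
    rw [hF]
    simp only
    simp_rw [coe_Nc hcard σ htraceless horth Nc c hN1 hNσ X]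
    rw [Finset.mul_sum]
    refine Finset.sum_le_sum fun i _ => ?_
    rw [Complex.normSq_mul, Complex.normSq_ofReal]
    have h1 : c i * c i ≤ q ^ 2 := by
      have := abs_mul_abs_self (c i)
      nlinarith [hc i, abs_nonneg (c i)]
    exact mul_le_mul_of_nonneg_right h1 (Complex.normSq_nonneg _)
  -- unitary conjugation preserves F
  have hFU : ∀ V ∈ Matrix.unitaryGroup (Fin (2^n)) ℂ,
      ∀ X, F (V * X * Vᴴ) = F X := by
    intro V hV X
    have hVV : Vᴴ * V = 1 := by
      have := Matrix.mem_unitaryGroup_iff'.mp hV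
      rwa [Matrix.star_eq_conjTranspose] at this
    apply Complex.ofReal_injective
    rw [hF]
    simp only
    rw [F_formula hcard σ hherm htraceless horth, F_formula hcard σ hherm htraceless horth]
    have hct : (V * X * Vᴴ)ᴴ = V * Xᴴ * Vᴴ := by
      simp [Matrix.conjTranspose_mul, Matrix.mul_assoc]
    have h3 : (V * Xᴴ * Vᴴ) * (V * X * Vᴴ) = V * (Xᴴ * ((Vᴴ * V) * (X * Vᴴ))) := by
      noncomm_ring
    have h4 : (Xᴴ * (X * Vᴴ)) * V = (Xᴴ * X) * (Vᴴ * V) := by noncomm_ring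
    have h1 : ((V * X * Vᴴ)ᴴ * (V * X * Vᴴ)).trace = (Xᴴ * X).trace := by
      rw [hct, h3, hVV, Matrix.one_mul, Matrix.trace_mul_comm, h4, hVV, Matrix.mul_one]
    have h2 : (V * X * Vᴴ).trace = X.trace := by
      rw [Matrix.trace_mul_cycle, hVV, Matrix.one_mul]
    rw [h1, h2]
  -- initial value of F
  have hFρ₀ : F ρ₀ = (2:ℝ)^n - 1 := by
    apply Complex.ofReal_injective
    rw [hF]
    simp only
    rw [F_formula hcard σ hherm htraceless horth]
    rw [hρ₀psd.isHermitian.eq, hρ₀pure, hρ₀tr]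
    push_cast
    simp
  -- circuit bound
  have hfold : ∀ (l : List (Matrix (Fin (2^n)) (Fin (2^n)) ℂ)),
      (∀ V ∈ l, V ∈ Matrix.unitaryGroup (Fin (2^n)) ℂ) →
      ∀ s, F (l.foldl (fun s V => Nc (V * s * Vᴴ)) s) ≤ q^(2*l.length) * F s := by
    intro l
    induction l with
    | nil => intro _ s; simp
    | cons V rest ih =>
      intro hl s
      have hV := hl V List.mem_cons_self
      have hrest : ∀ W ∈ rest, W ∈ Matrix.unitaryGroup (Fin (2^n)) ℂ :=
        fun W hW => hl W (List.mem_cons_of_mem _ hW)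
      simp only [List.foldl_cons, List.length_cons]
      calc F (rest.foldl (fun s V => Nc (V * s * Vᴴ)) (Nc (V * s * Vᴴ)))
          ≤ q^(2*rest.length) * F (Nc (V * s * Vᴴ)) := ih hrest _
        _ ≤ q^(2*rest.length) * (q^2 * F (V * s * Vᴴ)) :=
            mul_le_mul_of_nonneg_left (hFNc _) (pow_nonneg hq0 _)
        _ = q^(2*(rest.length+1)) * F s := by rw [hFU V hV s]; ring
  set ρL := runCircuit Nc Us ρ₀ with hρL
  have hFL : F ρL ≤ q^(2*(Us.length+1)) * ((2:ℝ)^n - 1) := by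
    rw [hρL]
    unfold runCircuit
    calc F (Us.foldl (fun s V => Nc (V * s * Vᴴ)) (Nc ρ₀))
        ≤ q^(2*Us.length) * F (Nc ρ₀) := hfold Us hUs _
      _ ≤ q^(2*Us.length) * (q^2 * F ρ₀) :=
          mul_le_mul_of_nonneg_left (hFNc _) (pow_nonneg hq0 _)
      _ = q^(2*(Us.length+1)) * ((2:ℝ)^n - 1) := by rw [hFρ₀]; ring
  have habs : ∀ i, ‖(σ i * ρL).trace‖ ≤ q^(Us.length+1) * Real.sqrt (2^n) := by
    intro i
    rw [Complex.norm_def]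
    have h1 : Complex.normSq ((σ i * ρL).trace) ≤ F ρL :=
      Finset.single_le_sum (f := fun j => Complex.normSq ((σ j * ρL).trace))
        (fun j _ => Complex.normSq_nonneg _) (Finset.mem_univ i)
    have h2 : F ρL ≤ q^(2*(Us.length+1)) * (2:ℝ)^n := by
      refine hFL.trans ?_
      have hqp : (0:ℝ) ≤ q^(2*(Us.length+1)) := pow_nonneg hq0 _
      nlinarith [pow_pos (by norm_num : (0:ℝ) < 2) n]
    calc Real.sqrt (Complex.normSq ((σ i * ρL).trace))
        ≤ Real.sqrt (q^(2*(Us.length+1)) * (2:ℝ)^n) := Real.sqrt_le_sqrt (h1.trans h2)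
      _ = q^(Us.length+1) * Real.sqrt ((2:ℝ)^n) := by
          rw [Real.sqrt_mul (pow_nonneg hq0 _)]
          congr 1
          rw [show 2*(Us.length+1) = (Us.length+1)*2 from by ring, pow_mul]
          exact Real.sqrt_sq (pow_nonneg hq0 _)
  -- trace computations
  have hOtr : O.trace = 0 := by
    rw [hO, Matrix.trace_sum]
    simp [Matrix.trace_smul, htraceless]
  have hCt : (Otilde * ρL).trace = ∑ i, ((qM ^ (w i) * ω i : ℝ) : ℂ) * (σ i * ρL).trace := by
    rw [hOtilde, Finset.sum_mul, Matrix.trace_sum]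
    simp_rw [Matrix.smul_mul, Matrix.trace_smul, smul_eq_mul]
  rw [hCt, hOtr, zero_div, sub_zero]
  set s := Finset.univ.filter (fun i => ω i ≠ 0) with hs
  have hsum : ∑ i, ((qM ^ (w i) * ω i : ℝ) : ℂ) * (σ i * ρL).trace
      = ∑ i ∈ s, ((qM ^ (w i) * ω i : ℝ) : ℂ) * (σ i * ρL).trace := by
    symm
    apply Finset.sum_filter_of_ne
    intro x _ hx h0
    apply hx
    rw [h0]
    push_cast
    ring
  rw [hsum]
  have hSnn : ∀ i ∈ s, |ω i| ≤ ⨆ j, |ω j| := fun i _ =>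
    le_ciSup (f := fun j => |ω j|) (Set.Finite.bddAbove (Set.finite_range _)) i
  have hterm : ∀ i ∈ s, ‖((qM ^ (w i) * ω i : ℝ) : ℂ) * (σ i * ρL).trace‖
      ≤ qM^wmin * (⨆ j, |ω j|) * (q^(Us.length+1) * Real.sqrt ((2:ℝ)^n)) := by
    intro i hi
    have hωi : ω i ≠ 0 := (Finset.mem_filter.mp hi).2
    have hSge : (0:ℝ) ≤ ⨆ j, |ω j| := (abs_nonneg (ω i)).trans (hSnn i hi)
    rw [norm_mul, Complex.norm_real, Real.norm_eq_abs, abs_mul, abs_of_nonneg (pow_nonneg hqM0 _)]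
    have h1 : qM ^ (w i) ≤ qM ^ wmin := pow_le_pow_of_le_one hqM0 hqM1 (hwsupp i hωi)
    have h2 : qM ^ (w i) * |ω i| ≤ qM^wmin * (⨆ j, |ω j|) :=
      mul_le_mul h1 (hSnn i hi) (abs_nonneg _) (pow_nonneg hqM0 _)
    exact mul_le_mul h2 (habs i) (norm_nonneg _)
      (mul_nonneg (pow_nonneg hqM0 _) hSge)
  calc ‖∑ i ∈ s, ((qM ^ (w i) * ω i : ℝ) : ℂ) * (σ i * ρL).trace‖
      ≤ ∑ i ∈ s, ‖((qM ^ (w i) * ω i : ℝ) : ℂ) * (σ i * ρL).trace‖ :=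
        norm_sum_le _ _
    _ ≤ ∑ _i ∈ s, qM^wmin * (⨆ j, |ω j|) * (q^(Us.length+1) * Real.sqrt ((2:ℝ)^n)) :=
        Finset.sum_le_sum hterm
    _ = (s.card : ℝ) * (qM^wmin * (⨆ j, |ω j|) * (q^(Us.length+1) * Real.sqrt ((2:ℝ)^n))) := by
        rw [Finset.sum_const, nsmul_eq_mul]
    _ = qM ^ wmin * (s.card : ℝ) * (⨆ i, |ω i|) * Real.sqrt (2^n) * q ^ (Us.length + 1) := by
        ring
end
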